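/- Suppose Q(x) ∈ 𝔔. Then the power series Q̂(x), with coefficients q̂(0)=0 and q̂(n) = ∑_{m=1}^n ⌊n/m⌋·m·q(m) for n ≥ 1, belongs to RT1. -/

import Mathlib

open Filter Finset

noncomputable section

/-- `R ∈ RT1`: coefficients eventually positive and `r(n-1)/r(n) → 1`. -/
def RT1 (r : ℕ → ℝ) : Prop :=
  (∀ᶠ n in Filter.atTop, 0 < r n) ∧
    Filter.Tendsto (fun n => r (n - 1) / r n) Filter.atTop (nhds 1)

/-- The coefficients are all natural numbers. -/
def IsNatSeries (r : ℕ → ℝ) : Prop := ∀ n, ∃ k : ℕ, r n = (k : ℝ)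

/-- Members of `RT1` with natural-number coefficients. -/
def RTN1 (r : ℕ → ℝ) : Prop := RT1 r ∧ IsNatSeries r

/-- Coefficient sequence of `R(x^d)`. -/
def substPow (d : ℕ) (r : ℕ → ℝ) : ℕ → ℝ := fun n => if d ∣ n then r (n / d) else 0

/-- Cauchy product of coefficient sequences. -/
def cauchy (a b : ℕ → ℝ) : ℕ → ℝ := fun n => ∑ j ∈ Finset.range (n + 1), a j * b (n - j)

/-- A polynomial with natural-number coefficients (as a coefficient sequence). -/
def IsNatPoly (p : ℕ → ℝ) : Prop := IsNatSeries p ∧ ∃ N, ∀ n, N ≤ n → p n = 0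

/-- Coefficient sequence of `x^c · A(x)`. -/
def xPowMul (c : ℕ) (a : ℕ → ℝ) : ℕ → ℝ := fun n => if c ≤ n then a (n - c) else 0

/-- `𝔔`: nonzero power series of the form `x^c · R(x^d)` with `0 ≤ c < d`, `R ∈ RTN1`. -/
def InQ (q : ℕ → ℝ) : Prop :=
  q ≠ 0 ∧ ∃ (c d : ℕ) (r : ℕ → ℝ), c < d ∧ RTN1 r ∧ q = xPowMul c (substPow d r)

/-- `𝔖`: nonzero power series with natural-number coefficients and zero constant term
expressible as `p₀(x) + ∑_{i=1}^k p_i(x) · R_i(x^{d_i})` with the `p_i ∈ ℕ[x]`,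
`R_i ∈ RTN1` and `d_i ≥ 1`. -/
def InS (a : ℕ → ℝ) : Prop :=
  a ≠ 0 ∧ a 0 = 0 ∧ IsNatSeries a ∧
    ∃ (k : ℕ) (p : ℕ → (ℕ → ℝ)) (R : ℕ → (ℕ → ℝ)) (d : ℕ → ℕ),
      IsNatPoly (p 0) ∧
      (∀ i ∈ Finset.Icc 1 k, IsNatPoly (p i) ∧ RTN1 (R i) ∧ 1 ≤ d i) ∧
      ∀ n, a n = p 0 n + ∑ i ∈ Finset.Icc 1 k, cauchy (p i) (substPow (d i) (R i)) n

/-- For `Q ∈ 𝔔`, the series `Q̂(x)` with `q̂(n) = ∑_{m=1}^n ⌊n/m⌋·m·q(m)` is in `RT1`. -/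


private lemma aux_pow_le_two {K : ℕ} (hK : 1 ≤ K) :
    (1 + 1/(2*(K:ℝ)))^K ≤ 2 := by
  have hKpos : (1:ℝ) ≤ K := by exact_mod_cast hK
  set a : ℝ := 1/(2*(K:ℝ)) with ha
  have ha0 : 0 < a := by positivity
  have ha1 : a ≤ 1/2 := by
    rw [ha, div_le_div_iff₀ (by positivity) (by norm_num)]
    nlinarith
  have hb : (1/2 : ℝ) ≤ (1-a)^K := by
    have := one_add_mul_le_pow (a := -a) (by linarith) K
    have hKa : (K:ℝ) * a = 1/2 := by
      rw [ha]; field_simp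
    calc (1/2:ℝ) = 1 + (K:ℝ) * (-a) := by rw [mul_neg, hKa]; ring
    _ ≤ (1 + -a)^K := this
    _ = (1-a)^K := by ring_nf
  have hprod : (1+a)^K * (1-a)^K ≤ 1 := by
    rw [← mul_pow]
    have h1 : (1+a)*(1-a) = 1 - a^2 := by ring
    rw [h1]
    apply pow_le_one₀ <;> nlinarith
  nlinarith [pow_pos (show (0:ℝ) < 1 - a by linarith) K, pow_pos (show (0:ℝ) < 1 + a by linarith) K]

private lemma ratio_bounds {r : ℕ → ℝ} (hpos : ∀ᶠ n in atTop, 0 < r n)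
    (hlim : Tendsto (fun n => r (n-1) / r n) atTop (nhds 1)) {ε : ℝ} (hε : 0 < ε) :
    ∃ N : ℕ, 1 ≤ N ∧ ∀ n, N ≤ n →
      0 < r n ∧ r n ≤ (1+ε) * r (n+1) ∧ r (n+1) ≤ (1+ε) * r n := by
  have hε1 : 0 < ε/(1+ε) := by positivity
  obtain ⟨N1, hN1⟩ := (Metric.tendsto_atTop.1 hlim) (ε/(1+ε)) hε1
  obtain ⟨N2, hN2⟩ := eventually_atTop.1 hpos
  refine ⟨N1 + N2 + 1, by omega, ?_⟩
  intro n hn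
  have hrn : 0 < r n := hN2 n (by omega)
  have hrn1 : 0 < r (n+1) := hN2 (n+1) (by omega)
  have hd := hN1 (n+1) (by omega)
  simp only [Nat.add_sub_cancel, Real.dist_eq] at hd
  rw [abs_lt] at hd
  have h1ε : (0:ℝ) < 1+ε := by linarith
  have hlow : (1 - ε/(1+ε)) * r (n+1) < r n := by
    rw [← lt_div_iff₀ hrn1]; linarith
  have hhigh : r n < (1 + ε/(1+ε)) * r (n+1) := by
    rw [← div_lt_iff₀ hrn1]; linarith
  refine ⟨hrn, ?_, ?_⟩
  · have : ε/(1+ε) ≤ ε := by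
      rw [div_le_iff₀ h1ε]; nlinarith
    nlinarith
  · have key : (1 - ε/(1+ε)) = 1/(1+ε) := by field_simp; ring
    rw [key] at hlow
    calc r (n+1) = (1+ε) * ((1/(1+ε)) * r (n+1)) := by field_simp
    _ ≤ (1+ε) * r n := by nlinarith

private lemma iter_bound {r : ℕ → ℝ} {ε : ℝ} (hε : 0 ≤ ε) {N : ℕ}
    (h : ∀ n, N ≤ n → r (n+1) ≤ (1+ε) * r n) :
    ∀ i j, N ≤ j → r (j+i) ≤ (1+ε)^i * r j := by
  intro i
  induction i with
  | zero => intro j hj; simp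
  | succ i ih =>
    intro j hj
    have h1 : r (j+i+1) ≤ (1+ε) * r (j+i) := h (j+i) (by omega)
    have h2 : r (j+i) ≤ (1+ε)^i * r j := ih j hj
    calc r (j+(i+1)) = r (j+i+1) := by ring_nf
    _ ≤ (1+ε) * r (j+i) := h1
    _ ≤ (1+ε) * ((1+ε)^i * r j) := by nlinarith
    _ = (1+ε)^(i+1) * r j := by ring

set_option maxHeartbeats 1600000 in
theorem qhat_RT1 (q : ℕ → ℝ) (hq : InQ q) :
    RT1 (fun n => ∑ m ∈ Finset.Icc 1 n, ((n / m : ℕ) : ℝ) * ((m : ℝ) * q m)) := by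
  obtain ⟨-, c, d, r, hcd, ⟨⟨hpos, hlim⟩, hnat⟩, hqe⟩ := hq
  have hd0 : 0 < d := by omega
  set f : ℕ → ℝ := fun n => ∑ m ∈ Finset.Icc 1 n, ((n / m : ℕ) : ℝ) * ((m : ℝ) * q m) with hf
  have hr0 : ∀ j, 0 ≤ r j := fun j => by obtain ⟨k, hk⟩ := hnat j; rw [hk]; positivity
  have hq0 : ∀ m, 0 ≤ q m := by
    intro m
    rw [hqe]; unfold xPowMul substPow
    split_ifs <;> simp [hr0]
  have hq_eq : ∀ j, q (c + j*d) = r j := by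
    intro j
    rw [hqe]; unfold xPowMul substPow
    rw [if_pos (by omega), Nat.add_sub_cancel_left, if_pos ⟨j, by ring⟩]
    congr 1
    rw [Nat.mul_comm]; exact Nat.mul_div_cancel_left j hd0
  have hq_ne : ∀ m, q m ≠ 0 → ∃ j, m = c + j*d := by
    intro m hm
    rw [hqe] at hm; unfold xPowMul substPow at hm
    by_cases h1 : c ≤ m
    · rw [if_pos h1] at hm
      by_cases h2 : d ∣ (m - c)
      · obtain ⟨j, hj⟩ := h2
        exact ⟨j, by rw [Nat.mul_comm j d]; omega⟩
      · rw [if_neg h2] at hm; simp at hm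
    · rw [if_neg h1] at hm; simp at hm
  -- nonneg terms and subset lower bound
  have hterm : ∀ (n m : ℕ), 0 ≤ ((n / m : ℕ) : ℝ) * ((m : ℝ) * q m) := by
    intro n m; have := hq0 m; positivity
  have hf0 : ∀ n, 0 ≤ f n := fun n => Finset.sum_nonneg fun m _ => hterm n m
  have hsub : ∀ (n : ℕ) (S : Finset ℕ), S ⊆ Finset.Icc 1 n →
      ∑ m ∈ S, ((n / m : ℕ) : ℝ) * ((m : ℝ) * q m) ≤ f n := by
    intro n S hS
    exact Finset.sum_le_sum_of_subset_of_nonneg hS fun m _ _ => hterm n m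
  have hmono : ∀ n : ℕ, f (n-1) ≤ f n := by
    intro n
    calc f (n-1) ≤ ∑ m ∈ Finset.Icc 1 (n-1), ((n / m : ℕ) : ℝ) * ((m : ℝ) * q m) := by
          apply Finset.sum_le_sum
          intro m hm
          have h1 : ((n-1) / m : ℕ) ≤ (n / m : ℕ) := Nat.div_le_div_right (by omega)
          have := hq0 m
          have hc : (((n-1) / m : ℕ):ℝ) ≤ ((n / m : ℕ):ℝ) := by exact_mod_cast h1
          exact mul_le_mul_of_nonneg_right hc (by positivity)
    _ ≤ f n := hsub n _ (Finset.Icc_subset_Icc_right (by omega))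
  -- eventual positivity of f
  obtain ⟨N1, hN1⟩ := eventually_atTop.1 hpos
  set M1 : ℕ := c + (N1+1)*d with hM1
  have hM1pos : 1 ≤ M1 := by have := hd0; have : (N1+1)*d ≥ 1 := Nat.one_le_iff_ne_zero.2 (by positivity); omega
  have hfpos : ∀ n, M1 ≤ n → 0 < f n := by
    intro n hn
    have hqM1 : 0 < q M1 := by rw [hM1, hq_eq]; exact hN1 _ (by omega)
    have hsingle : ({M1} : Finset ℕ) ⊆ Finset.Icc 1 n := by
      intro x hx; simp at hx; subst hx; simp; omega
    have h1 : ((n / M1 : ℕ) : ℝ) * ((M1 : ℝ) * q M1) ≤ f n := by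
      have := hsub n {M1} hsingle
      simpa using this
    have hnd : 1 ≤ n / M1 := (Nat.one_le_div_iff (by omega)).2 hn
    have : (0:ℝ) < ((n / M1 : ℕ) : ℝ) * ((M1 : ℝ) * q M1) := by
      apply mul_pos
      · exact_mod_cast hnd
      · apply mul_pos _ hqM1; exact_mod_cast hM1pos
    linarith
  -- difference identity
  have hdiff : ∀ n : ℕ, 1 ≤ n → f n - f (n-1) = ∑ m ∈ n.divisors, (m:ℝ) * q m := by
    intro n hn
    obtain ⟨k, rfl⟩ : ∃ k, n = k + 1 := ⟨n - 1, by omega⟩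
    simp only [Nat.add_sub_cancel]
    have hstep : f (k+1) = f k + ∑ m ∈ (k+1).divisors, (m:ℝ) * q m := by
      have e1 : f (k+1) = ∑ m ∈ Finset.Icc 1 (k+1),
          (((k / m : ℕ) : ℝ) * ((m : ℝ) * q m)
            + (if m ∣ k+1 then (1:ℝ) else 0) * ((m : ℝ) * q m)) := by
        rw [hf]
        apply Finset.sum_congr rfl
        intro m hm
        rw [Nat.succ_div]
        push_cast
        split_ifs <;> ring
      rw [e1, Finset.sum_add_distrib]
      congr 1
      · -- first sum equals f k
        rw [Finset.sum_Icc_succ_top (by omega : 1 ≤ k+1)]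
        rw [Nat.div_eq_of_lt (by omega)]
        simp [hf]
      · -- second sum equals divisor sum
        have hset : (Finset.Icc 1 (k+1)).filter (fun x => x ∣ k+1) = (k+1).divisors := by
          ext m
          simp only [Finset.mem_filter, Finset.mem_Icc, Nat.mem_divisors]
          constructor
          · rintro ⟨⟨h1,h2⟩, h3⟩; exact ⟨h3, by omega⟩
          · rintro ⟨h1, h2⟩
            exact ⟨⟨Nat.pos_of_dvd_of_pos h1 (by omega), Nat.le_of_dvd (by omega) h1⟩, h1⟩
        rw [← hset, Finset.sum_filter]
        apply Finset.sum_congr rfl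
        intro m hm
        split_ifs <;> ring
    rw [hstep]; ring
  -- small-index bound
  have hsmall : ∀ (n J : ℕ), 1 ≤ J →
      (J:ℝ) * ∑ m ∈ Finset.Icc 1 (n/J), ((m:ℝ) * q m) ≤ f n := by
    intro n J hJ1
    rw [Finset.mul_sum]
    refine le_trans (Finset.sum_le_sum ?_) (hsub n _ (Finset.Icc_subset_Icc_right (Nat.div_le_self n J)))
    intro m hm
    simp only [Finset.mem_Icc] at hm
    have hJm : J ≤ n / m := by
      rw [Nat.le_div_iff_mul_le (by omega)]
      have := (Nat.le_div_iff_mul_le (by omega : 0 < J)).1 hm.2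
      nlinarith [this]
    have hc : (J:ℝ) ≤ ((n/m : ℕ):ℝ) := by exact_mod_cast hJm
    have h0 : (0:ℝ) ≤ (m:ℝ) * q m := by have := hq0 m; positivity
    exact mul_le_mul_of_nonneg_right hc h0
  -- the main estimate
  have hmain : ∀ δ : ℝ, 0 < δ → ∀ᶠ n in atTop, f n - f (n-1) ≤ δ * f n := by
    intro δ hδ
    set J : ℕ := max 1 ⌈2/δ⌉₊ with hJ
    have hJ1 : 1 ≤ J := le_max_left _ _
    have hJδ : 2/δ ≤ (J:ℝ) := le_trans (Nat.le_ceil _) (Nat.cast_le.mpr (le_max_right _ _))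
    set K : ℕ := max 1 ⌈8*(J:ℝ)/δ⌉₊ with hK
    have hK1 : 1 ≤ K := le_max_left _ _
    have hKδ : 8*(J:ℝ)/δ ≤ (K:ℝ) := le_trans (Nat.le_ceil _) (Nat.cast_le.mpr (le_max_right _ _))
    set ε : ℝ := 1/(2*(K:ℝ)) with hε
    have hε0 : 0 < ε := by
      have : (0:ℝ) < K := by exact_mod_cast hK1
      positivity
    have hC : (1+ε)^K ≤ 2 := aux_pow_le_two hK1
    obtain ⟨N, hNle, hN⟩ := ratio_bounds hpos hlim hε0
    have hiter : ∀ i j, N ≤ j → r (j+i) ≤ (1+ε)^i * r j :=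
      iter_bound (le_of_lt hε0) (fun n hn => (hN n hn).2.2)
    set B : ℕ := c + (N+K)*d + 2*(K*d) with hB
    rw [eventually_atTop]
    refine ⟨J*B + J + 1, ?_⟩
    intro n hn
    have hn1 : 1 ≤ n := by omega
    have hnJB : B ≤ n / J := by
      rw [Nat.le_div_iff_mul_le (by omega)]
      nlinarith [hn]
    rw [hdiff n hn1]
    rw [← Finset.sum_filter_add_sum_filter_not n.divisors (fun m => m ≤ n / J)]
    have hKR : (0:ℝ) < K := by exact_mod_cast hK1
    have hJR : (0:ℝ) < J := by exact_mod_cast hJ1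
    have hb1 : ∑ m ∈ n.divisors.filter (fun m => m ≤ n / J), (m:ℝ) * q m ≤ (δ/2) * f n := by
      have hsubs : n.divisors.filter (fun m => m ≤ n / J) ⊆ Finset.Icc 1 (n/J) := by
        intro m hm
        simp only [Finset.mem_filter, Nat.mem_divisors] at hm
        simp only [Finset.mem_Icc]
        exact ⟨Nat.pos_of_dvd_of_pos hm.1.1 (by omega), hm.2⟩
      have h1 : ∑ m ∈ n.divisors.filter (fun m => m ≤ n / J), (m:ℝ) * q m
          ≤ ∑ m ∈ Finset.Icc 1 (n/J), (m:ℝ) * q m := by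
        apply Finset.sum_le_sum_of_subset_of_nonneg hsubs
        intro m _ _; have := hq0 m; positivity
      have h2 := hsmall n J hJ1
      have h3 : 2 ≤ δ * J := by
        rw [div_le_iff₀ hδ] at hJδ; linarith
      have hnn : (0:ℝ) ≤ ∑ m ∈ Finset.Icc 1 (n/J), (m:ℝ) * q m :=
        Finset.sum_nonneg fun m _ => by have := hq0 m; positivity
      nlinarith [hf0 n]
    have hb2 : ∑ m ∈ n.divisors.filter (fun m => ¬ m ≤ n / J), (m:ℝ) * q m ≤ (δ/2) * f n := by
      set T := n.divisors.filter (fun m => ¬ m ≤ n / J) with hT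
      have hcard : T.card ≤ J := by
        have hc1 : T.card ≤ (Finset.range J).card := by
          apply Finset.card_le_card_of_injOn (fun m => n / m)
          · intro m hm
            simp only [hT, Finset.mem_coe, Finset.mem_filter, Nat.mem_divisors] at hm
            obtain ⟨⟨hdvd, hn0⟩, hgt⟩ := hm
            have hm0 : 0 < m := Nat.pos_of_dvd_of_pos hdvd (by omega)
            simp only [Finset.mem_coe, Finset.mem_range]
            by_contra hcon
            push_neg at hcon
            have h2 : J * m ≤ n := (Nat.le_div_iff_mul_le hm0).1 hcon
            exact hgt ((Nat.le_div_iff_mul_le (by omega : 0 < J)).2 (by nlinarith [h2]))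
          · intro m1 h1 m2 h2 heq
            simp only [hT, Finset.coe_filter, Set.mem_setOf_eq, Nat.mem_divisors] at h1 h2
            have e1 : n / (n / m1) = m1 := Nat.div_div_self h1.1.1 h1.1.2
            have e2 : n / (n / m2) = m2 := Nat.div_div_self h2.1.1 h2.1.2
            simp only at heq
            rw [← e1, ← e2, heq]
        simpa using hc1
      have hper : ∀ m ∈ T, (m:ℝ) * q m ≤ 4/(K:ℝ) * f n := by
        intro m hm
        simp only [hT, Finset.mem_filter, Nat.mem_divisors] at hm
        obtain ⟨⟨hdvd, hn0⟩, hgt⟩ := hm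
        push_neg at hgt
        have hmB : B < m := lt_of_le_of_lt hnJB hgt
        have hmn : m ≤ n := Nat.le_of_dvd (by omega) hdvd
        by_cases hqm : q m = 0
        · rw [hqm, mul_zero]
          have := hf0 n
          positivity
        obtain ⟨j, hmj⟩ := hq_ne m hqm
        have hjNK : N + K ≤ j := by
          have h1 : (N+K)*d < j*d := by omega
          exact le_of_lt (Nat.lt_of_mul_lt_mul_right h1)
        have hKdm : 2*(K*d) < m := by omega
        set S := (Finset.Icc 1 K).image (fun i => m - i*d) with hS
        have hSsub : S ⊆ Finset.Icc 1 n := by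
          intro x hx
          simp only [hS, Finset.mem_image] at hx
          obtain ⟨i, hi, rfl⟩ := hx
          simp only [Finset.mem_Icc] at hi ⊢
          have hidK : i*d ≤ K*d := Nat.mul_le_mul_right d hi.2
          omega
        have hsum_eq : ∑ x ∈ S, ((n/x : ℕ):ℝ) * ((x:ℝ) * q x)
            = ∑ i ∈ Finset.Icc 1 K, ((n/(m-i*d) : ℕ):ℝ) * (((m-i*d : ℕ):ℝ) * q (m-i*d)) := by
          rw [hS]
          apply Finset.sum_image
          intro i1 h1 i2 h2 heq
          simp only [Finset.mem_coe, Finset.mem_Icc] at h1 h2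
          have g1 : i1*d ≤ K*d := Nat.mul_le_mul_right d h1.2
          have g2 : i2*d ≤ K*d := Nat.mul_le_mul_right d h2.2
          have g3 : i1*d = i2*d := by simp only at heq; omega
          exact Nat.eq_of_mul_eq_mul_right hd0 g3
        have hlower : ∀ i ∈ Finset.Icc 1 K,
            ((m - K*d : ℕ):ℝ) * (r j / 2)
              ≤ ((n/(m-i*d) : ℕ):ℝ) * (((m-i*d : ℕ):ℝ) * q (m-i*d)) := by
          intro i hi
          simp only [Finset.mem_Icc] at hi
          have hidK : i*d ≤ K*d := Nat.mul_le_mul_right d hi.2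
          have hij : i ≤ j := by omega
          have hmi : m - i*d = c + (j-i)*d := by
            have h2 : (j-i)*d = j*d - i*d := Nat.sub_mul j i d
            have h3 : i*d ≤ j*d := Nat.mul_le_mul_right d hij
            omega
          have hqmi : q (m - i*d) = r (j-i) := by rw [hmi, hq_eq]
          have hrj : r j ≤ 2 * r (j-i) := by
            have h4 := hiter i (j-i) (by omega)
            rw [show j - i + i = j by omega] at h4
            have h5 : (1+ε)^i ≤ (1+ε)^K := pow_le_pow_right₀ (by linarith) hi.2
            nlinarith [hr0 (j-i)]
          have hndiv : 1 ≤ n / (m - i*d) := (Nat.one_le_div_iff (by omega)).2 (by omega)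
          have hc1 : (1:ℝ) ≤ ((n/(m-i*d) : ℕ):ℝ) := by exact_mod_cast hndiv
          have hc2 : ((m - K*d : ℕ):ℝ) ≤ ((m - i*d : ℕ):ℝ) := by
            have hle : m - K*d ≤ m - i*d := by omega
            exact_mod_cast hle
          have hrpos : 0 ≤ r (j - i) := hr0 _
          have hrj2 : r j / 2 ≤ r (j - i) := by linarith
          have hq0' : 0 ≤ q (m - i*d) := hq0 _
          calc ((m - K*d : ℕ):ℝ) * (r j / 2) ≤ ((m - i*d : ℕ):ℝ) * r (j-i) := by
                apply mul_le_mul hc2 hrj2 (by linarith [hr0 j]) (by positivity)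
          _ = 1 * (((m - i*d : ℕ):ℝ) * q (m-i*d)) := by rw [hqmi]; ring
          _ ≤ _ := by
                apply mul_le_mul_of_nonneg_right hc1
                positivity
        have hfS : (K:ℝ) * (((m - K*d : ℕ):ℝ) * (r j / 2)) ≤ f n := by
          have h6 := Finset.card_nsmul_le_sum (Finset.Icc 1 K) _ _ hlower
          rw [Nat.card_Icc, nsmul_eq_mul] at h6
          simp only [Nat.add_sub_cancel] at h6
          exact le_trans h6 (le_trans hsum_eq.symm.le (hsub n S hSsub))
        have hqmr : q m = r j := by rw [hmj, hq_eq]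
        have hcast : ((m - K*d : ℕ):ℝ) = (m:ℝ) - (K:ℝ)*(d:ℝ) := by
          push_cast [Nat.cast_sub (by omega : K*d ≤ m)]
          ring
        have hge : (m:ℝ)/2 ≤ ((m - K*d : ℕ):ℝ) := by
          rw [hcast]
          have : 2*((K:ℝ)*(d:ℝ)) < (m:ℝ) := by exact_mod_cast hKdm
          linarith
        rw [hqmr, div_mul_eq_mul_div, le_div_iff₀ hKR]
        have hrj0 : 0 ≤ r j := hr0 j
        nlinarith [hfS, hge, mul_le_mul_of_nonneg_right hge (hr0 j)]
      have hsumT := Finset.sum_le_card_nsmul T _ _ hper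
      rw [nsmul_eq_mul] at hsumT
      have hcardR : (T.card : ℝ) ≤ J := Nat.cast_le.mpr hcard
      have h8 : 8*(J:ℝ) ≤ δ * K := by
        rw [div_le_iff₀ hδ] at hKδ; linarith
      have hb : (T.card : ℝ) * (4/(K:ℝ) * f n) ≤ (J:ℝ) * (4/(K:ℝ) * f n) := by
        apply mul_le_mul_of_nonneg_right hcardR
        have := hf0 n; positivity
      have hfin : (J:ℝ) * (4/(K:ℝ) * f n) ≤ (δ/2) * f n := by
        rw [div_mul_eq_mul_div, mul_div_assoc']
        rw [div_le_iff₀ hKR]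
        nlinarith [hf0 n]
      linarith
    linarith
  refine ⟨?_, ?_⟩
  · rw [eventually_atTop]
    exact ⟨M1, fun n hn => hfpos n hn⟩
  · have h0 : Tendsto (fun n => (f n - f (n-1))/f n) atTop (nhds 0) := by
      rw [NormedAddCommGroup.tendsto_nhds_zero]
      intro ε' hε'
      filter_upwards [hmain (ε'/2) (by linarith), eventually_ge_atTop M1] with n hn1 hn2
      have hfp := hfpos n hn2
      have hmn := hmono n
      have h1 : 0 ≤ (f n - f (n-1))/f n := div_nonneg (by linarith) (le_of_lt hfp)
      rw [Real.norm_eq_abs, abs_of_nonneg h1, div_lt_iff₀ hfp]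
      nlinarith
    have h2 : Tendsto (fun n => 1 - (f n - f (n-1))/f n) atTop (nhds 1) := by
      have h3 := (tendsto_const_nhds : Tendsto (fun _ : ℕ => (1:ℝ)) atTop (nhds 1)).sub h0
      simpa using h3
    apply h2.congr'
    filter_upwards [eventually_ge_atTop M1] with n hn
    have hfp := hfpos n hn
    field_simp
    ring
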